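/- Let f ∈ B be nonzero and let f̄ denote its conjugate. If f and f̄ are relatively prime in B, meaning fB ∩ f̄B = f·f̄·B, then f ∈ Δ(B). -/

import Mathlib

/-- `f ∈ Δ(B)`: `f` is nonzero and has no real divisor with respect to the
real form `A ⊆ B`: whenever `f ∈ rB` with `r ∈ A` nonzero, `r` is a unit of `A`. -/
def Delta {B : Type} [CommRing B] (A : Subring B) (f : B) : Prop :=
  f ≠ 0 ∧ ∀ r : A, (r : B) ≠ 0 → (r : B) ∣ f → IsUnit r

/-- Let `A` be a Noetherian integral `ℝ`-domain in which `ℝ` is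
algebraically closed, `B = ℂ ⊗ℝ A` an integral domain (so `B = A ⊕ iA`), and `σ`
the conjugation of `B` (fixing `A` pointwise and sending `i` to `−i`).
If `f ≠ 0` and `f`, `σ f` are relatively prime, i.e. `fB ∩ f̄B = f·f̄·B`,
then `f ∈ Δ(B)`. -/
theorem mem_Delta_of_relatively_prime_conj (B : Type) [CommRing B] [IsDomain B]
    [Algebra ℂ B] [Algebra ℝ B] [IsScalarTower ℝ ℂ B] (A : Subring B)
    (hRmem : ∀ r : ℝ, algebraMap ℝ B r ∈ A)
    (hNoeth : IsNoetherianRing ↥A)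
    (halgclosed : ∀ a ∈ A, IsAlgebraic ℝ a → ∃ r : ℝ, a = algebraMap ℝ B r)
    (hdecomp : ∀ b : B, ∃! p : ↥A × ↥A,
      b = (p.1 : B) + algebraMap ℂ B Complex.I * (p.2 : B))
    (σ : B →+* B)
    (hσfix : ∀ a ∈ A, σ a = a)
    (hσI : σ (algebraMap ℂ B Complex.I) = -algebraMap ℂ B Complex.I)
    (f : B) (hf : f ≠ 0)
    (hrelprime : Ideal.span {f} ⊓ Ideal.span {σ f} = Ideal.span {f * σ f}) :
    Delta A f := by
  refine ⟨hf, ?_⟩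
  intro r hr hdvd
  obtain ⟨g, hg⟩ := hdvd
  have hσr : σ (r : B) = r := hσfix r r.2
  have hinv : ∀ b : B, σ (σ b) = b := by
    intro b
    obtain ⟨⟨p1, p2⟩, hp, -⟩ := hdecomp b
    have h1 : σ (p1 : B) = p1 := hσfix _ p1.2
    have h2 : σ (p2 : B) = p2 := hσfix _ p2.2
    rw [hp]
    simp [map_add, map_mul, h1, h2, hσI]
  have hg0 : g ≠ 0 := by
    rintro rfl
    exact hf (by rw [hg, mul_zero])
  have hσg0 : σ g ≠ 0 := by
    intro h
    have := hinv g
    rw [h, map_zero] at this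
    exact hg0 this.symm
  have hσf : σ f = (r : B) * σ g := by rw [hg, map_mul, hσr]
  have hmem : f * σ g ∈ Ideal.span {f} ⊓ Ideal.span {σ f} := by
    constructor
    · exact Ideal.mem_span_singleton.2 ⟨σ g, rfl⟩
    · refine Ideal.mem_span_singleton.2 ⟨g, ?_⟩
      rw [hσf, hg]; ring
  rw [hrelprime, Ideal.mem_span_singleton] at hmem
  obtain ⟨b, hb⟩ := hmem
  rw [hσf] at hb
  have key : (r : B) * b = 1 := by
    have h1 : f * (σ g * (1 - (r : B) * b)) = 0 := by linear_combination hb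
    have h2 : σ g * (1 - (r : B) * b) = 0 := by
      rcases mul_eq_zero.1 h1 with h | h
      · exact absurd h hf
      · exact h
    rcases mul_eq_zero.1 h2 with h | h
    · exact absurd h hσg0
    · linear_combination -h
  obtain ⟨⟨s1, s2⟩, hs, -⟩ := hdecomp b
  obtain ⟨⟨p, q⟩, -, huniq⟩ := hdecomp 1
  have e1 : (1 : B) = ((r * s1 : ↥A) : B)
      + algebraMap ℂ B Complex.I * ((r * s2 : ↥A) : B) := by
    push_cast
    rw [← key, hs]; ring
  have e2 : (1 : B) = ((1 : ↥A) : B) + algebraMap ℂ B Complex.I * ((0 : ↥A) : B) := by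
    simp
  have heq : (⟨r * s1, r * s2⟩ : ↥A × ↥A) = ⟨1, 0⟩ :=
    (huniq _ e1).trans (huniq _ e2).symm
  have : r * s1 = 1 := congrArg Prod.fst heq
  exact IsUnit.of_mul_eq_one (a := r) s1 this
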